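/- Let μ be a ferromagnetic Ising Gibbs measure on {−1,1}^Λ, Λ finite, with nonnegative magnetic fields h_i ≥ 0 and couplings J_{ij} ≥ 0. Then for every A ⊆ Λ, ⟨σ_A⟩_μ ≥ 0, where σ_A = Π_{i∈A} σ_i (first Griffiths inequality). -/

import Mathlib

/-- The spin value `±1` associated to a Boolean. -/
noncomputable def spin (b : Bool) : ℝ := if b then 1 else -1

lemma spin_mul_self (b : Bool) : spin b * spin b = 1 := by
  cases b <;> simp [spin]

lemma spin_mul_ne {a b : Bool} (hab : a ≠ b) : spin a * spin b = -1 := by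
  cases a <;> cases b <;> simp_all [spin]

section Griffiths

variable {Λ : Type*} [Fintype Λ] [DecidableEq Λ]

/-- character -/
noncomputable def chi (B : Finset Λ) (σ : Λ → Bool) : ℝ := ∏ i ∈ B, spin (σ i)

lemma chi_mul (B C : Finset Λ) (σ : Λ → Bool) :
    chi B σ * chi C σ = chi (symmDiff B C) σ := by
  classical
  unfold chi
  have hSD : (symmDiff B C : Finset Λ) = (B \ C) ∪ (C \ B) := by
    ext x; simp [Finset.mem_symmDiff, Finset.mem_sdiff, Finset.mem_union]
  have eB : (∏ i ∈ B, spin (σ i))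
      = (∏ i ∈ B \ C, spin (σ i)) * ∏ i ∈ B ∩ C, spin (σ i) := by
    rw [← Finset.prod_sdiff (Finset.inter_subset_left (s₂ := C)),
      Finset.sdiff_inter_self_left]
  have eC : (∏ i ∈ C, spin (σ i))
      = (∏ i ∈ C \ B, spin (σ i)) * ∏ i ∈ B ∩ C, spin (σ i) := by
    rw [Finset.inter_comm, ← Finset.prod_sdiff (Finset.inter_subset_left (s₂ := B)),
      Finset.sdiff_inter_self_left]
  have hsq : (∏ i ∈ B ∩ C, spin (σ i)) * ∏ i ∈ B ∩ C, spin (σ i) = 1 := by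
    rw [← Finset.prod_mul_distrib]
    exact Finset.prod_eq_one fun i _ => spin_mul_self _
  rw [hSD, Finset.prod_union (by
      rw [Finset.disjoint_left]; intro a ha hb
      simp [Finset.mem_sdiff] at ha hb; tauto), eB, eC]
  calc ((∏ i ∈ B \ C, spin (σ i)) * ∏ i ∈ B ∩ C, spin (σ i)) *
        ((∏ i ∈ C \ B, spin (σ i)) * ∏ i ∈ B ∩ C, spin (σ i))
      = (∏ i ∈ B \ C, spin (σ i)) * (∏ i ∈ C \ B, spin (σ i)) *
        ((∏ i ∈ B ∩ C, spin (σ i)) * ∏ i ∈ B ∩ C, spin (σ i)) := by ring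
    _ = (∏ i ∈ B \ C, spin (σ i)) * ∏ i ∈ C \ B, spin (σ i) := by rw [hsq, mul_one]

lemma sum_chi_nonneg (S : Finset Λ) : 0 ≤ ∑ σ : Λ → Bool, chi S σ := by
  classical
  rcases S.eq_empty_or_nonempty with rfl | ⟨j, hj⟩
  · simp [chi]
  · have : ∑ σ : Λ → Bool, chi S σ = 0 := by
      apply Finset.sum_ninvolution (fun σ => Function.update σ j (!σ j))
      · intro σ
        have : chi S (Function.update σ j (!σ j)) = - chi S σ := by
          unfold chi
          rw [← Finset.prod_erase_mul _ _ hj, ← Finset.prod_erase_mul _ _ hj]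
          have h1 : ∀ i ∈ S.erase j, spin (Function.update σ j (!σ j) i) = spin (σ i) := by
            intro i hi
            rw [Function.update_of_ne (Finset.ne_of_mem_erase hi)]
          rw [Finset.prod_congr rfl h1, Function.update_self]
          have : spin (!σ j) = - spin (σ j) := by cases σ j <;> simp [spin]
          rw [this]; ring
        rw [this]; ring
      · intro σ _ hEq
        have := congrFun hEq j
        simp at this
      · intro σ; exact Finset.mem_univ _
      · intro σ
        ext i
        by_cases hij : i = j
        · subst hij; simp
        · simp [Function.update_of_ne hij]
    rw [this]

/-- Fourier inversion on the hypercube. -/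
lemma chi_inversion (v : (Λ → Bool) → ℝ) (σ : Λ → Bool) :
    ∑ B : Finset Λ, (∑ τ : Λ → Bool, v τ * chi B τ) * chi B σ
      = 2 ^ (Fintype.card Λ) * v σ := by
  classical
  have swap : ∑ B : Finset Λ, (∑ τ : Λ → Bool, v τ * chi B τ) * chi B σ
      = ∑ τ : Λ → Bool, v τ * ∑ B : Finset Λ, chi B τ * chi B σ := by
    have e1 : ∀ B : Finset Λ, (∑ τ : Λ → Bool, v τ * chi B τ) * chi B σ
        = ∑ τ : Λ → Bool, v τ * chi B τ * chi B σ := fun B => Finset.sum_mul _ _ _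
    rw [Finset.sum_congr rfl fun B _ => e1 B, Finset.sum_comm]
    apply Finset.sum_congr rfl
    intro τ _
    rw [Finset.mul_sum]
    apply Finset.sum_congr rfl
    intro B _
    ring
  rw [swap]
  have key : ∀ τ : Λ → Bool, (∑ B : Finset Λ, chi B τ * chi B σ)
      = if τ = σ then (2 : ℝ) ^ (Fintype.card Λ) else 0 := by
    intro τ
    have h1 : ∀ B : Finset Λ, chi B τ * chi B σ = ∏ i ∈ B, (spin (τ i) * spin (σ i)) := by
      intro B; unfold chi; rw [← Finset.prod_mul_distrib]
    have h2 : ∑ B : Finset Λ, chi B τ * chi B σ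
        = ∏ i : Λ, (spin (τ i) * spin (σ i) + 1) := by
      rw [Finset.prod_add]
      rw [← Finset.powerset_univ]
      rw [Finset.sum_congr rfl (fun B _ => h1 B)]
      apply Finset.sum_congr rfl
      intro B _
      simp
    rw [h2]
    by_cases hts : τ = σ
    · subst hts
      simp only [if_pos rfl]
      have : ∀ i : Λ, spin (τ i) * spin (τ i) + 1 = 2 := by
        intro i; rw [spin_mul_self]; norm_num
      rw [Finset.prod_congr rfl (fun i _ => this i), Finset.prod_const]
      simp
    · simp only [if_neg hts]
      obtain ⟨i, hi⟩ : ∃ i, τ i ≠ σ i := by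
        by_contra hcon
        push_neg at hcon
        exact hts (funext hcon)
      apply Finset.prod_eq_zero (Finset.mem_univ i)
      rw [spin_mul_ne hi]; ring
  rw [Finset.sum_congr rfl (fun τ _ => by rw [key τ])]
  simp [Finset.sum_ite_eq', mul_comm]

/-- The positivity cone. -/
def Pos (w : (Λ → Bool) → ℝ) : Prop :=
  ∀ A : Finset Λ, 0 ≤ ∑ σ : Λ → Bool, w σ * chi A σ

lemma Pos_chi (B : Finset Λ) : Pos (chi B) := by
  intro A
  have : ∀ σ : Λ → Bool, chi B σ * chi A σ = chi (symmDiff B A) σ := fun σ => chi_mul B A σ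
  rw [Finset.sum_congr rfl (fun σ _ => this σ)]
  exact sum_chi_nonneg _

lemma Pos_add {w v : (Λ → Bool) → ℝ} (hw : Pos w) (hv : Pos v) :
    Pos (fun σ => w σ + v σ) := by
  intro A
  have : ∑ σ : Λ → Bool, (w σ + v σ) * chi A σ
      = (∑ σ : Λ → Bool, w σ * chi A σ) + ∑ σ : Λ → Bool, v σ * chi A σ := by
    rw [← Finset.sum_add_distrib]
    apply Finset.sum_congr rfl; intro σ _; ring
  rw [this]
  exact add_nonneg (hw A) (hv A)

lemma Pos_smul {w : (Λ → Bool) → ℝ} {c : ℝ} (hc : 0 ≤ c) (hw : Pos w) :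
    Pos (fun σ => c * w σ) := by
  intro A
  have : ∑ σ : Λ → Bool, (c * w σ) * chi A σ = c * ∑ σ : Λ → Bool, w σ * chi A σ := by
    rw [Finset.mul_sum]; apply Finset.sum_congr rfl; intro σ _; ring
  rw [this]
  exact mul_nonneg hc (hw A)

lemma Pos_sum {ι : Type*} (s : Finset ι) (f : ι → (Λ → Bool) → ℝ)
    (hf : ∀ i ∈ s, Pos (f i)) : Pos (fun σ => ∑ i ∈ s, f i σ) := by
  classical
  induction s using Finset.induction_on with
  | empty => intro A; simp
  | @insert a s hnot ih =>
    have h1 : Pos (f a) := hf a (Finset.mem_insert_self a s)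
    have h2 : Pos (fun σ => ∑ i ∈ s, f i σ) :=
      ih (fun i hi => hf i (Finset.mem_insert_of_mem hi))
    have := Pos_add h1 h2
    intro A
    have heq : ∀ σ : Λ → Bool, ∑ i ∈ insert a s, f i σ = f a σ + ∑ i ∈ s, f i σ := by
      intro σ; rw [Finset.sum_insert hnot]
    simpa only [heq] using this A

lemma Pos_mul {w v : (Λ → Bool) → ℝ} (hw : Pos w) (hv : Pos v) :
    Pos (fun σ => w σ * v σ) := by
  intro A
  have hpow : (0:ℝ) < 2 ^ (Fintype.card Λ) := by positivity
  rw [← mul_nonneg_iff_of_pos_left hpow]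
  have hkey : (2:ℝ) ^ (Fintype.card Λ) * ∑ σ : Λ → Bool, (w σ * v σ) * chi A σ
      = ∑ B : Finset Λ, (∑ τ : Λ → Bool, v τ * chi B τ) *
          ∑ σ : Λ → Bool, w σ * chi (symmDiff B A) σ := by
    rw [Finset.mul_sum]
    have h1 : ∀ σ : Λ → Bool, (2:ℝ) ^ (Fintype.card Λ) * ((w σ * v σ) * chi A σ)
        = w σ * chi A σ * (∑ B : Finset Λ, (∑ τ : Λ → Bool, v τ * chi B τ) * chi B σ) := by
      intro σ
      rw [chi_inversion v σ]; ring
    rw [Finset.sum_congr rfl (fun σ _ => h1 σ)]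
    have h2 : ∀ σ : Λ → Bool,
        w σ * chi A σ * (∑ B : Finset Λ, (∑ τ : Λ → Bool, v τ * chi B τ) * chi B σ)
        = ∑ B : Finset Λ, w σ * chi A σ * ((∑ τ : Λ → Bool, v τ * chi B τ) * chi B σ) :=
      fun σ => Finset.mul_sum _ _ _
    rw [Finset.sum_congr rfl (fun σ _ => h2 σ), Finset.sum_comm]
    apply Finset.sum_congr rfl
    intro B _
    rw [Finset.mul_sum]
    apply Finset.sum_congr rfl
    intro σ _
    have : chi B σ * chi A σ = chi (symmDiff B A) σ := chi_mul B A σ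
    calc w σ * chi A σ * ((∑ τ : Λ → Bool, v τ * chi B τ) * chi B σ)
        = (∑ τ : Λ → Bool, v τ * chi B τ) * (w σ * (chi B σ * chi A σ)) := by ring
      _ = (∑ τ : Λ → Bool, v τ * chi B τ) * (w σ * chi (symmDiff B A) σ) := by rw [this]
  rw [hkey]
  apply Finset.sum_nonneg
  intro B _
  exact mul_nonneg (hv B) (hw _)

lemma Pos_pow {x : (Λ → Bool) → ℝ} (hx : Pos x) (n : ℕ) :
    Pos (fun σ => (x σ) ^ n) := by
  induction n with
  | zero =>
    simp only [pow_zero]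
    have := Pos_chi (Λ := Λ) ∅
    convert this using 1; funext σ; simp [chi]
  | succ n ih =>
    have := Pos_mul hx ih
    intro A
    have heq : ∀ σ : Λ → Bool, x σ ^ (n + 1) = x σ * x σ ^ n := by
      intro σ; ring
    simpa only [heq] using this A

lemma Pos_exp {x : (Λ → Bool) → ℝ} (hx : Pos x) :
    Pos (fun σ => Real.exp (x σ)) := by
  intro A
  have hpartial : ∀ N : ℕ,
      0 ≤ ∑ σ : Λ → Bool, (∑ n ∈ Finset.range N, (x σ) ^ n / n.factorial) * chi A σ := by
    intro N
    have : Pos (fun σ => ∑ n ∈ Finset.range N, (n.factorial : ℝ)⁻¹ * (x σ) ^ n) := by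
      apply Pos_sum
      intro n _
      exact Pos_smul (by positivity) (Pos_pow hx n)
    have h := this A
    have heq : ∀ σ : Λ → Bool,
        (∑ n ∈ Finset.range N, (n.factorial : ℝ)⁻¹ * (x σ) ^ n)
          = ∑ n ∈ Finset.range N, (x σ) ^ n / n.factorial := by
      intro σ; apply Finset.sum_congr rfl; intro n _; rw [div_eq_inv_mul]
    simpa only [heq] using h
  have htends : Filter.Tendsto
      (fun N => ∑ σ : Λ → Bool, (∑ n ∈ Finset.range N, (x σ) ^ n / n.factorial) * chi A σ)
      Filter.atTop (nhds (∑ σ : Λ → Bool, Real.exp (x σ) * chi A σ)) := by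
    apply tendsto_finset_sum
    intro σ _
    apply Filter.Tendsto.mul_const
    have hs : HasSum (fun n : ℕ => (x σ) ^ n / n.factorial) (Real.exp (x σ)) := by
      rw [Real.exp_eq_exp_ℝ]
      exact NormedSpace.expSeries_div_hasSum_exp (x σ)
    exact hs.tendsto_sum_nat
  exact ge_of_tendsto' htends hpartial

end Griffiths

/-- First Griffiths (GKS) inequality: for nonnegative fields and ferromagnetic couplings,
`⟨σ_A⟩ ≥ 0`. -/
theorem griffiths_first (Λ : Type*) [Fintype Λ] [DecidableEq Λ]
    (β : ℝ) (hβ : 0 ≤ β) (h : Λ → ℝ) (hh : ∀ i, 0 ≤ h i)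
    (J : Λ → Λ → ℝ) (hJ : ∀ i j, 0 ≤ J i j) (hJsymm : ∀ i j, J i j = J j i)
    (w : (Λ → Bool) → ℝ)
    (hw : ∀ σ : Λ → Bool, w σ =
      Real.exp (β * ((∑ i, h i * spin (σ i)) +
        (1 / 2) * ∑ i, ∑ j, J i j * spin (σ i) * spin (σ j))))
    (A : Finset Λ) :
    0 ≤ ∑ σ : Λ → Bool, w σ * ∏ i ∈ A, spin (σ i) := by
  classical
  -- the exponent as a function of σ
  set x : (Λ → Bool) → ℝ := fun σ =>
    β * ((∑ i, h i * spin (σ i)) +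
      (1 / 2) * ∑ i, ∑ j, J i j * spin (σ i) * spin (σ j)) with hx
  -- field terms are Pos
  have hfield : Pos (fun σ => ∑ i, h i * spin (σ i)) := by
    apply Pos_sum
    intro i _
    have := Pos_smul (hh i) (Pos_chi {i})
    intro B
    have heq : ∀ σ : Λ → Bool, h i * chi ({i} : Finset Λ) σ = h i * spin (σ i) := by
      intro σ; simp [chi]
    simpa only [heq] using this B
  -- pair terms are Pos
  have hpair : Pos (fun σ => ∑ i, ∑ j, J i j * spin (σ i) * spin (σ j)) := by
    apply Pos_sum
    intro i _
    apply Pos_sum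
    intro j _
    by_cases hij : i = j
    · subst hij
      have := Pos_smul (hJ i i) (Pos_chi (∅ : Finset Λ))
      intro B
      have heq : ∀ σ : Λ → Bool,
          J i i * chi (∅ : Finset Λ) σ = J i i * spin (σ i) * spin (σ i) := by
        intro σ; simp [chi]; rw [mul_assoc, spin_mul_self, mul_one]
      simpa only [heq] using this B
    · have := Pos_smul (hJ i j) (Pos_chi ({i, j} : Finset Λ))
      intro B
      have heq : ∀ σ : Λ → Bool,
          J i j * chi ({i, j} : Finset Λ) σ = J i j * spin (σ i) * spin (σ j) := by
        intro σ
        unfold chi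
        rw [Finset.prod_pair hij, mul_assoc]
      simpa only [heq] using this B
  have hxpos : Pos x := by
    have h2 : Pos (fun σ => (1/2 : ℝ) * ∑ i, ∑ j, J i j * spin (σ i) * spin (σ j)) :=
      Pos_smul (by norm_num) hpair
    have hsum := Pos_add hfield h2
    have := Pos_smul hβ hsum
    intro B
    simpa only [hx] using this B
  have := Pos_exp hxpos A
  have heq : ∀ σ : Λ → Bool, w σ * ∏ i ∈ A, spin (σ i) = Real.exp (x σ) * chi A σ := by
    intro σ; rw [hw σ, hx]; rfl
  rw [Finset.sum_congr rfl (fun σ _ => heq σ)]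
  exact this
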